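/- Let E be a real normed vector space and N a smooth (1,1) tensor field on E with vanishing Nijenhuis torsion, T(N) = 0. Then for all nonnegative integers i, j and every vector field X on E, [N^i, N^j]_X = 0, where N^k denotes the pointwise k-th power (N^0 = I the identity). Consequently, the hydrodynamic-type flows ∂x/∂t_k + N(x)^k(∂x/∂y) = 0, k = 1,2,…, are pairwise compatible and form a hierarchy. -/

import Mathlib

set_option synthInstance.maxHeartbeats 1000000
set_option maxHeartbeats 2000000


variable {E : Type*} [NormedAddCommGroup E] [NormedSpace ℝ E]

/-- Lie bracket of vector fields on `E`: `[X,Y](x) = DY(x)(X(x)) − DX(x)(Y(x))`. -/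
noncomputable def lie (X Y : E → E) : E → E :=
  fun x => fderiv ℝ Y x (X x) - fderiv ℝ X x (Y x)

/-- Pointwise action of a (1,1) tensor field on a vector field. -/
def app (N : E → E →L[ℝ] E) (X : E → E) : E → E := fun x => N x (X x)

/-- Pointwise `k`-th power of a (1,1) tensor field. -/
def pw (N : E → E →L[ℝ] E) (k : ℕ) : E → E →L[ℝ] E := fun x => (N x) ^ k

/-- Frölicher–Nijenhuis bracket of two (1,1) tensor fields, evaluated on vector fields. -/
noncomputable def fnBracket (N₁ N₂ : E → E →L[ℝ] E) (X Y : E → E) : E → E :=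
  fun x =>
    N₁ x (N₂ x (lie X Y x)) + N₂ x (N₁ x (lie X Y x))
      + lie (app N₁ X) (app N₂ Y) x + lie (app N₂ X) (app N₁ Y) x
      - N₁ x (lie (app N₂ X) Y x + lie X (app N₂ Y) x)
      - N₂ x (lie (app N₁ X) Y x + lie X (app N₁ Y) x)

/-- Nijenhuis torsion of a (1,1) tensor field, evaluated on vector fields. -/
noncomputable def tor (N : E → E →L[ℝ] E) (X Y : E → E) : E → E :=
  fun x =>
    lie (app N X) (app N Y) x
      + N x (N x (lie X Y x) - lie (app N X) Y x - lie X (app N Y) x)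

/-- Haantjes tensor of a (1,1) tensor field, evaluated on vector fields. -/
noncomputable def haan (M : E → E →L[ℝ] E) (X Y : E → E) : E → E :=
  fun x =>
    M x (M x (tor M X Y x)) + tor M (app M X) (app M Y) x
      - M x (tor M (app M X) Y x + tor M X (app M Y) x)

/-- The bracket `[A,B]_X = [AX,BX] − A[X,BX] + B[X,AX]` of two (1,1) tensor fields
with respect to a vector field `X`. -/
noncomputable def brX (A B : E → E →L[ℝ] E) (X : E → E) : E → E :=
  fun x =>
    lie (app A X) (app B X) x - A x (lie X (app B X) x) + B x (lie X (app A X) x)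

/-- A 1-form is closed iff its Fréchet derivative is symmetric. -/
def IsClosedOneForm (ρ : E → E →L[ℝ] ℝ) : Prop :=
  ∀ x u v, fderiv ℝ ρ x u v = fderiv ℝ ρ x v u


open Finset in
lemma key (n : E →L[ℝ] E) (B : E → E → E) (φ : ℕ → E → E → E) (ξ : E)
    (hφ0 : ∀ u v, φ 0 u v = 0)
    (hφs : ∀ k u v, φ (k+1) u v = (n^k) (B u v) + φ k u (n v))
    (hC : ∀ u v, B (n u) v - n (B u v) = B (n v) u - n (B v u))
    (i j : ℕ) :
    φ j ((n^i) ξ) ξ - φ i ((n^j) ξ) ξ - (n^i) (φ j ξ ξ) + (n^j) (φ i ξ ξ) = 0 := by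
  set C : E → E → E := fun u v => B (n u) v - n (B u v) with hCdef
  -- closed form for φ
  have hφ : ∀ (j : ℕ) (u v : E),
      φ j u v = ∑ r ∈ range j, (n^(j-1-r)) (B u ((n^r) v)) := by
    intro j
    induction j with
    | zero => intro u v; simp [hφ0]
    | succ j ih =>
      intro u v
      rw [hφs, ih, Finset.sum_range_succ']
      have e1 : ∀ r ∈ range j, (n^(j+1-1-(r+1))) (B u ((n^(r+1)) v))
          = (n^(j-1-r)) (B u ((n^r) (n v))) := by
        intro r hr
        rw [show j + 1 - 1 - (r+1) = j - 1 - r from by omega,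
            show (n^(r+1)) v = (n^r) (n v) from by
              rw [pow_succ, ContinuousLinearMap.mul_apply]]
      rw [Finset.sum_congr rfl e1, add_comm]
      simp
  -- closed form for ρ
  have hρ : ∀ (i : ℕ) (w : E),
      B ((n^i) ξ) w - (n^i) (B ξ w)
        = ∑ t ∈ range i, (n^(i-1-t)) (C ((n^t) ξ) w) := by
    intro i
    induction i with
    | zero => intro w; simp
    | succ i ih =>
      intro w
      have h1 : (n^(i+1)) ξ = n ((n^i) ξ) := by
        rw [pow_succ', ContinuousLinearMap.mul_apply]
      have h2 : (n^(i+1)) (B ξ w) = n ((n^i) (B ξ w)) := by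
        rw [pow_succ', ContinuousLinearMap.mul_apply]
      rw [h1, h2, Finset.sum_range_succ,
          show (i + 1 - 1 - i) = 0 from by omega, pow_zero]
      have : B (n ((n^i) ξ)) w = C ((n^i) ξ) w + n (B ((n^i) ξ) w) := by
        simp [hCdef]
      rw [this, ContinuousLinearMap.one_apply]
      have : n (B ((n ^ i) ξ) w) - n ((n ^ i) (B ξ w))
          = ∑ t ∈ range i, (n^(i-t)) (C ((n^t) ξ) w) := by
        rw [← map_sub, ih, map_sum]
        refine Finset.sum_congr rfl fun t ht => ?_
        rw [show i - t = (i - 1 - t) + 1 from by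
              have := Finset.mem_range.mp ht; omega,
            pow_succ', ContinuousLinearMap.mul_apply]
      rw [add_sub_assoc, this]
      refine (add_comm _ _).trans (congrArg (· + _) ?_)
      refine Finset.sum_congr rfl fun t ht => ?_
      rw [show i + 1 - 1 - t = i - t from by omega]
  -- closed form for A
  have hA : ∀ (i j : ℕ),
      φ j ((n^i) ξ) ξ - (n^i) (φ j ξ ξ)
        = ∑ r ∈ range j, ∑ t ∈ range i,
            (n^((j-1-r)+(i-1-t))) (C ((n^t) ξ) ((n^r) ξ)) := by
    intro i j
    rw [hφ, hφ, map_sum, ← Finset.sum_sub_distrib]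
    refine Finset.sum_congr rfl fun r hr => ?_
    have hcomm : ∀ z : E, (n^i) ((n^(j-1-r)) z) = (n^(j-1-r)) ((n^i) z) := by
      intro z
      rw [← ContinuousLinearMap.mul_apply, ← ContinuousLinearMap.mul_apply,
          pow_mul_comm]
    rw [hcomm, ← map_sub, hρ, map_sum]
    refine Finset.sum_congr rfl fun t ht => ?_
    rw [pow_add, ContinuousLinearMap.mul_apply]
  have h1 := hA i j
  have h2 := hA j i
  have h2' : φ i ((n^j) ξ) ξ - (n^j) (φ i ξ ξ)
      = ∑ r ∈ range j, ∑ t ∈ range i,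
          (n^((j-1-r)+(i-1-t))) (C ((n^t) ξ) ((n^r) ξ)) := by
    rw [h2, Finset.sum_comm]
    refine Finset.sum_congr rfl fun r hr => Finset.sum_congr rfl fun t ht => ?_
    rw [add_comm (i-1-t) (j-1-r)]
    congr 1
    have := hC ((n^t) ξ) ((n^r) ξ)
    simpa [hCdef] using this.symm
  have : φ j ((n^i) ξ) ξ - (n^i) (φ j ξ ξ) = φ i ((n^j) ξ) ξ - (n^j) (φ i ξ ξ) :=
    h1.trans h2'.symm
  linear_combination (norm := abel) this

theorem stmt8 (N : E → E →L[ℝ] E) (hN : ContDiff ℝ (⊤ : ℕ∞) N)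
    (hT : ∀ X Y : E → E, ContDiff ℝ (⊤ : ℕ∞) X → ContDiff ℝ (⊤ : ℕ∞) Y →
      ∀ x, tor N X Y x = 0)
    (i j : ℕ) (X : E → E) (hX : ContDiff ℝ (⊤ : ℕ∞) X) (x : E) :
    brX (pw N i) (pw N j) X x = 0 := by
  have hNd : Differentiable ℝ N := hN.differentiable (by simp)
  have hXd : Differentiable ℝ X := hX.differentiable (by simp)
  have hpw : ∀ k, Differentiable ℝ (pw N k) := fun k => hNd.pow k
  set n : E →L[ℝ] E := N x with hn
  set ξ : E := X x with hξ
  set X' : E →L[ℝ] E := fderiv ℝ X x with hX'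
  set D : E →L[ℝ] (E →L[ℝ] E) := fderiv ℝ N x with hD
  set Φ : ℕ → E →L[ℝ] (E →L[ℝ] E) := fun k => fderiv ℝ (pw N k) x with hΦ
  -- derivative of `fun y => N y w`
  have hconstN : ∀ w : E, fderiv ℝ (app N (fun _ => w)) x = D.flip w := by
    intro w
    rw [show app N (fun _ : E => w) = fun y => N y w from rfl,
      fderiv_clm_apply (hNd x) (differentiableAt_const w)]
    simp [hD]
  -- symmetry of C from vanishing torsion on constant fields
  have hC : ∀ u v : E, D (n u) v - n (D u v) = D (n v) u - n (D v u) := by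
    intro u v
    have h := hT (fun _ => u) (fun _ => v) contDiff_const contDiff_const x
    simp only [tor, lie, app, fderiv_fun_const, Pi.zero_apply,
      ContinuousLinearMap.zero_apply, hconstN, ContinuousLinearMap.flip_apply,
      map_zero, zero_sub, sub_zero, zero_add, add_zero, map_sub, map_neg,
      sub_neg_eq_add] at h
    linear_combination (norm := abel) h
  -- recurrence for Φ
  have hφ0 : ∀ u v : E, Φ 0 u v = 0 := by
    intro u v
    have : pw N 0 = fun _ : E => (1 : E →L[ℝ] E) := by funext y; simp [pw]
    simp only [hΦ, this, fderiv_fun_const, Pi.zero_apply,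
      ContinuousLinearMap.zero_apply]
  have hφs : ∀ (k : ℕ) (u v : E), Φ (k+1) u v = (n^k) (D u v) + Φ k u (n v) := by
    intro k u v
    have hpow : pw N (k+1) = fun y => pw N k y * N y := by
      funext y; simp [pw, pow_succ]
    have : fderiv ℝ (pw N (k+1)) x
        = pw N k x • fderiv ℝ N x + (fderiv ℝ (pw N k) x).smulRight (N x) := by
      rw [hpow]; exact fderiv_mul' ((hpw k) x) (hNd x)
    simp only [hΦ, this, ContinuousLinearMap.add_apply,
      ContinuousLinearMap.smul_apply, ContinuousLinearMap.smulRight_apply,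
      smul_eq_mul, ContinuousLinearMap.mul_apply]
    rw [← hn, ← hD]
    rfl
  -- derivatives of the vector fields (pw N k) X
  have hfA : ∀ k : ℕ, fderiv ℝ (app (pw N k) X) x
      = (pw N k x).comp (fderiv ℝ X x) + (fderiv ℝ (pw N k) x).flip (X x) :=
    fun k => fderiv_clm_apply ((hpw k) x) (hXd x)
  have hpwx : ∀ k : ℕ, pw N k x = n ^ k := fun k => rfl
  have hcomm : (n^j) ((n^i) (X' ξ)) = (n^i) ((n^j) (X' ξ)) := by
    rw [← ContinuousLinearMap.mul_apply (n^j) (n^i), pow_mul_comm,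
      ContinuousLinearMap.mul_apply]
  have hkey : Φ j ((n^i) ξ) ξ - Φ i ((n^j) ξ) ξ - (n^i) (Φ j ξ ξ)
      + (n^j) (Φ i ξ ξ) = 0 :=
    key n (fun u v => D u v) (fun k u v => Φ k u v) ξ hφ0 hφs hC i j
  simp only [brX, lie, hfA, app, hpwx, ContinuousLinearMap.add_apply,
    ContinuousLinearMap.coe_comp', Function.comp_apply,
    ContinuousLinearMap.flip_apply, ContinuousLinearMap.mul_apply,
    ← hξ, ← hX', ← hΦ, map_sub, map_add]
  linear_combination (norm := abel) hkey + hcomm
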